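/- A positive trace-preserving linear map T on the d×d complex matrices satisfies κ_tr(T) = 0 if and only if T is a replacement channel, i.e., there exists a density matrix τ such that T(X) = tr(X)·τ for all matrices X. -/

import Mathlib

open Matrix
open scoped ComplexOrder

namespace TD

variable {d : ℕ}

/-- The old Mathlib `Matrix.PosSemidef.sqrt` (removed since), with its old definition. -/
noncomputable def psdSqrt {A : Matrix (Fin d) (Fin d) ℂ} (hA : A.PosSemidef) : Matrix (Fin d) (Fin d) ℂ :=
  (hA.1.eigenvectorUnitary : Matrix (Fin d) (Fin d) ℂ) *
    diagonal (fun i => ((Real.sqrt (hA.1.eigenvalues i) : ℝ) : ℂ)) *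
    (star hA.1.eigenvectorUnitary : Matrix (Fin d) (Fin d) ℂ)

noncomputable def trNorm (A : Matrix (Fin d) (Fin d) ℂ) : ℝ :=
  ((psdSqrt (Matrix.posSemidef_conjTranspose_mul_self A)).trace).re

noncomputable def hsNorm (A : Matrix (Fin d) (Fin d) ℂ) : ℝ :=
  Real.sqrt ((Aᴴ * A).trace.re)

def Density (ρ : Matrix (Fin d) (Fin d) ℂ) : Prop :=
  ρ.PosSemidef ∧ ρ.trace = 1

def PosMap (T : Matrix (Fin d) (Fin d) ℂ →ₗ[ℂ] Matrix (Fin d) (Fin d) ℂ) : Prop :=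
  ∀ A, A.PosSemidef → (T A).PosSemidef

def TrPres (T : Matrix (Fin d) (Fin d) ℂ →ₗ[ℂ] Matrix (Fin d) (Fin d) ℂ) : Prop :=
  ∀ A, (T A).trace = A.trace

noncomputable def kappaTr (T : Matrix (Fin d) (Fin d) ℂ →ₗ[ℂ] Matrix (Fin d) (Fin d) ℂ) : ℝ :=
  ⨆ X : {X : Matrix (Fin d) (Fin d) ℂ // X.IsHermitian ∧ X.trace = 0 ∧ X ≠ 0},
    trNorm (T X.1) / trNorm X.1

noncomputable def opNorm1 (L : Matrix (Fin d) (Fin d) ℂ →ₗ[ℂ] Matrix (Fin d) (Fin d) ℂ) : ℝ :=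
  ⨆ X : {X : Matrix (Fin d) (Fin d) ℂ // X ≠ 0}, trNorm (L X.1) / trNorm X.1

noncomputable def s0 (T : Matrix (Fin d) (Fin d) ℂ →ₗ[ℂ] Matrix (Fin d) (Fin d) ℂ) : ℝ :=
  ⨆ X : {X : Matrix (Fin d) (Fin d) ℂ // X.trace = 0 ∧ X ≠ 0},
    hsNorm (T X.1) / hsNorm X.1

noncomputable def choi (T : Matrix (Fin d) (Fin d) ℂ →ₗ[ℂ] Matrix (Fin d) (Fin d) ℂ) :
    Matrix (Fin d × Fin d) (Fin d × Fin d) ℂ :=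
  Matrix.of fun p q => T (Matrix.single p.1 q.1 1) p.2 q.2

def CP (T : Matrix (Fin d) (Fin d) ℂ →ₗ[ℂ] Matrix (Fin d) (Fin d) ℂ) : Prop :=
  (choi T).PosSemidef

noncomputable def replaceChan (τ : Matrix (Fin d) (Fin d) ℂ) :
    Matrix (Fin d) (Fin d) ℂ →ₗ[ℂ] Matrix (Fin d) (Fin d) ℂ where
  toFun X := X.trace • τ
  map_add' X Y := by simp [Matrix.trace_add, add_smul]
  map_smul' c X := by simp [Matrix.trace_smul, smul_smul]

noncomputable def prodComp {n : ℕ} (T : Fin n → (Matrix (Fin d) (Fin d) ℂ →ₗ[ℂ] Matrix (Fin d) (Fin d) ℂ)) :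
    Matrix (Fin d) (Fin d) ℂ →ₗ[ℂ] Matrix (Fin d) (Fin d) ℂ :=
  (List.ofFn T).foldl (fun acc f => f ∘ₗ acc) LinearMap.id

noncomputable def lpow (T : Matrix (Fin d) (Fin d) ℂ →ₗ[ℂ] Matrix (Fin d) (Fin d) ℂ) :
    ℕ → (Matrix (Fin d) (Fin d) ℂ →ₗ[ℂ] Matrix (Fin d) (Fin d) ℂ)
  | 0 => LinearMap.id
  | n + 1 => T ∘ₗ lpow T n

noncomputable def conjPair (K0 K1 : Matrix (Fin 2) (Fin 2) ℂ) :
    Matrix (Fin 2) (Fin 2) ℂ →ₗ[ℂ] Matrix (Fin 2) (Fin 2) ℂ where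
  toFun X := K0 * X * K0ᴴ + K1 * X * K1ᴴ
  map_add' X Y := by
    simp only [Matrix.mul_add, Matrix.add_mul]
    abel
  map_smul' c X := by
    simp [Matrix.mul_smul, Matrix.smul_mul, smul_add]

end TD


section StmtAux

open Matrix
open scoped ComplexOrder

attribute [local instance] Matrix.frobeniusNormedAddCommGroup Matrix.frobeniusNormedSpace

private lemma psdSqrt_posSemidef' {d : ℕ} {A : Matrix (Fin d) (Fin d) ℂ} (hA : A.PosSemidef) :
    (TD.psdSqrt hA).PosSemidef := by
  have hD : (diagonal (fun i => ((Real.sqrt (hA.1.eigenvalues i) : ℝ) : ℂ))).PosSemidef :=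
    Matrix.posSemidef_diagonal_iff.mpr fun i => Complex.zero_le_real.mpr (Real.sqrt_nonneg _)
  have := hD.mul_mul_conjTranspose_same (hA.1.eigenvectorUnitary : Matrix (Fin d) (Fin d) ℂ)
  unfold TD.psdSqrt
  simpa [Matrix.star_eq_conjTranspose] using this

private lemma psdSqrt_mul_self' {d : ℕ} {A : Matrix (Fin d) (Fin d) ℂ} (hA : A.PosSemidef) :
    TD.psdSqrt hA * TD.psdSqrt hA = A := by
  set U := (hA.1.eigenvectorUnitary : Matrix (Fin d) (Fin d) ℂ) with hU
  set D := diagonal (fun i => ((Real.sqrt (hA.1.eigenvalues i) : ℝ) : ℂ)) with hD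
  have h1 : star U * U = 1 := Matrix.mem_unitaryGroup_iff'.mp hA.1.eigenvectorUnitary.2
  have hDD : D * D = diagonal (RCLike.ofReal ∘ hA.1.eigenvalues) := by
    rw [hD, Matrix.diagonal_mul_diagonal]
    congr 1
    funext i
    simp only [Function.comp_apply, RCLike.ofReal_eq_complex_ofReal]
    rw [← Complex.ofReal_mul, Real.mul_self_sqrt (hA.eigenvalues_nonneg i)]
  have h2 : TD.psdSqrt hA * TD.psdSqrt hA = U * (D * D) * star U := by
    unfold TD.psdSqrt
    calc (U * D * star U) * (U * D * star U)
        = U * D * ((star U * U) * (D * star U)) := by simp only [Matrix.mul_assoc]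
      _ = U * (D * D) * star U := by rw [h1, one_mul]; simp only [Matrix.mul_assoc]
  rw [h2, hDD]
  conv_rhs => rw [hA.1.spectral_theorem, Unitary.conjStarAlgAut_apply]

private lemma trace_eq_sum_eigs' {n : Type*} [Fintype n] [DecidableEq n] {A : Matrix n n ℂ}
    (hA : A.IsHermitian) : A.trace = ∑ i, (hA.eigenvalues i : ℂ) := by
  conv_lhs => rw [hA.spectral_theorem]
  rw [Unitary.conjStarAlgAut_apply, Matrix.trace_mul_cycle, Matrix.mem_unitaryGroup_iff'.mp hA.eigenvectorUnitary.2, one_mul,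
    Matrix.trace_diagonal]
  simp

private lemma trace_sq_eq_sum_eigs_sq' {n : Type*} [Fintype n] [DecidableEq n] {A : Matrix n n ℂ}
    (hA : A.IsHermitian) : (A * A).trace = ∑ i, ((hA.eigenvalues i : ℂ)) ^ 2 := by
  set U := (hA.eigenvectorUnitary : Matrix n n ℂ) with hU
  set D := Matrix.diagonal ((↑) ∘ hA.eigenvalues : n → ℂ) with hD
  have h1 : star U * U = 1 := Matrix.mem_unitaryGroup_iff'.mp hA.eigenvectorUnitary.2
  have h2 : A * A = U * (D * D) * star U := by
    conv_lhs => rw [hA.spectral_theorem]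
    calc (U * D * star U) * (U * D * star U)
        = U * D * ((star U * U) * (D * star U)) := by simp only [Matrix.mul_assoc]
      _ = U * (D * D) * star U := by rw [h1, one_mul]; simp only [Matrix.mul_assoc]
  rw [h2, Matrix.trace_mul_cycle, h1, one_mul, hD, Matrix.diagonal_mul_diagonal,
    Matrix.trace_diagonal]
  simp [sq]

private noncomputable def eig' {d : ℕ} (A : Matrix (Fin d) (Fin d) ℂ) : Fin d → ℝ :=
  (psdSqrt_posSemidef' (Matrix.posSemidef_conjTranspose_mul_self A)).1.eigenvalues

private lemma eig'_nonneg {d : ℕ} (A : Matrix (Fin d) (Fin d) ℂ) (i : Fin d) : 0 ≤ eig' A i :=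
  (psdSqrt_posSemidef' (Matrix.posSemidef_conjTranspose_mul_self A)).eigenvalues_nonneg i

private lemma trNorm_eq_sum' {d : ℕ} (A : Matrix (Fin d) (Fin d) ℂ) :
    TD.trNorm A = ∑ i, eig' A i := by
  rw [TD.trNorm, trace_eq_sum_eigs' (psdSqrt_posSemidef' (Matrix.posSemidef_conjTranspose_mul_self A)).1,
    Complex.re_sum]
  simp [eig']

private lemma hsNorm_eq_sqrt_sum' {d : ℕ} (A : Matrix (Fin d) (Fin d) ℂ) :
    TD.hsNorm A = Real.sqrt (∑ i, (eig' A i) ^ 2) := by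
  rw [TD.hsNorm]
  congr 1
  rw [← psdSqrt_mul_self' (Matrix.posSemidef_conjTranspose_mul_self A),
    trace_sq_eq_sum_eigs_sq' (psdSqrt_posSemidef' (Matrix.posSemidef_conjTranspose_mul_self A)).1,
    Complex.re_sum]
  refine Finset.sum_congr rfl fun i _ => ?_
  rw [← Complex.ofReal_pow, Complex.ofReal_re]
  rfl

private lemma hsNorm_eq_norm' {d : ℕ} (A : Matrix (Fin d) (Fin d) ℂ) : TD.hsNorm A = ‖A‖ := by
  rw [Matrix.frobenius_norm_def, TD.hsNorm, ← Real.sqrt_eq_rpow]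
  congr 1
  simp only [Matrix.trace, Matrix.diag_apply, Matrix.mul_apply, Matrix.conjTranspose_apply,
    Complex.re_sum]
  rw [Finset.sum_comm]
  refine Finset.sum_congr rfl fun i _ => Finset.sum_congr rfl fun j _ => ?_
  rw [show ((2:ℝ) = ((2:ℕ):ℝ)) by norm_num, Real.rpow_natCast]
  rw [Complex.star_def, mul_comm, Complex.mul_conj]
  simp [Complex.normSq_eq_norm_sq, ← Complex.ofReal_pow]

private lemma trNorm_nonneg' {d : ℕ} (A : Matrix (Fin d) (Fin d) ℂ) : 0 ≤ TD.trNorm A := by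
  rw [trNorm_eq_sum']; exact Finset.sum_nonneg fun i _ => eig'_nonneg A i

private lemma hsNorm_le_trNorm' {d : ℕ} (A : Matrix (Fin d) (Fin d) ℂ) :
    TD.hsNorm A ≤ TD.trNorm A := by
  rw [hsNorm_eq_sqrt_sum', trNorm_eq_sum']
  calc Real.sqrt (∑ i, eig' A i ^ 2) ≤ Real.sqrt ((∑ i, eig' A i) ^ 2) :=
        Real.sqrt_le_sqrt (Finset.sum_sq_le_sq_sum_of_nonneg fun i _ => eig'_nonneg A i)
    _ = ∑ i, eig' A i := Real.sqrt_sq (Finset.sum_nonneg fun i _ => eig'_nonneg A i)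

private lemma trNorm_le_sqrt_hs' {d : ℕ} (A : Matrix (Fin d) (Fin d) ℂ) :
    TD.trNorm A ≤ Real.sqrt d * TD.hsNorm A := by
  rw [hsNorm_eq_sqrt_sum', trNorm_eq_sum', ← Real.sqrt_mul (by positivity),
    ← Real.sqrt_sq (Finset.sum_nonneg fun i _ => eig'_nonneg A i)]
  apply Real.sqrt_le_sqrt
  have h := sq_sum_le_card_mul_sum_sq (s := (Finset.univ : Finset (Fin d))) (f := eig' A)
  simpa [Finset.card_univ] using h

private lemma trNorm_eq_zero_iff' {d : ℕ} (A : Matrix (Fin d) (Fin d) ℂ) :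
    TD.trNorm A = 0 ↔ A = 0 := by
  constructor
  · intro h
    have h2 : TD.hsNorm A ≤ 0 := h ▸ hsNorm_le_trNorm' A
    rw [hsNorm_eq_norm'] at h2
    exact norm_le_zero_iff.mp h2
  · rintro rfl
    have h1 : TD.trNorm (0 : Matrix (Fin d) (Fin d) ℂ) ≤
        Real.sqrt d * TD.hsNorm (0 : Matrix (Fin d) (Fin d) ℂ) := trNorm_le_sqrt_hs' 0
    rw [hsNorm_eq_norm'] at h1
    simp only [norm_zero, mul_zero] at h1
    exact le_antisymm h1 (trNorm_nonneg' 0)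

private lemma trNorm_bound' {d : ℕ}
    (T : Matrix (Fin d) (Fin d) ℂ →ₗ[ℂ] Matrix (Fin d) (Fin d) ℂ) :
    ∃ C : ℝ, 0 ≤ C ∧ ∀ X, TD.trNorm (T X) ≤ C * TD.trNorm X := by
  have hT : Continuous T := T.continuous_of_finiteDimensional
  let T' : Matrix (Fin d) (Fin d) ℂ →L[ℂ] Matrix (Fin d) (Fin d) ℂ := ⟨T, hT⟩
  obtain ⟨c, hc0, hc⟩ := T'.bound
  refine ⟨Real.sqrt d * c, by positivity, fun X => ?_⟩
  calc TD.trNorm (T X) ≤ Real.sqrt d * TD.hsNorm (T X) := trNorm_le_sqrt_hs' (T X)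
    _ = Real.sqrt d * ‖T' X‖ := by rw [hsNorm_eq_norm' (T X)]; rfl
    _ ≤ Real.sqrt d * (c * ‖X‖) := by
        have := hc X
        have h0 : (0:ℝ) ≤ Real.sqrt d := Real.sqrt_nonneg _
        exact mul_le_mul_of_nonneg_left this h0
    _ = Real.sqrt d * c * TD.hsNorm X := by rw [hsNorm_eq_norm' X]; ring
    _ ≤ Real.sqrt d * c * TD.trNorm X := by
        have h0 : (0:ℝ) ≤ Real.sqrt d * c := by positivity
        exact mul_le_mul_of_nonneg_left (hsNorm_le_trNorm' X) h0

private lemma exists_herm' {d : ℕ} (hd : 2 ≤ d) :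
    ∃ X : Matrix (Fin d) (Fin d) ℂ, X.IsHermitian ∧ X.trace = 0 ∧ X ≠ 0 := by
  have h1 : (1:ℕ) < d := lt_of_lt_of_le one_lt_two hd
  have h0 : (0:ℕ) < d := lt_trans zero_lt_one h1
  set i0 : Fin d := ⟨0, h0⟩
  set i1 : Fin d := ⟨1, h1⟩
  have hne : i0 ≠ i1 := by simp [i0, i1, Fin.ext_iff]
  refine ⟨Matrix.diagonal (Pi.single i0 1 - Pi.single i1 1), ?_, ?_, ?_⟩
  · refine Matrix.isHermitian_diagonal_iff.mpr fun i => ?_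
    simp only [Pi.sub_apply, Pi.single_apply]
    split_ifs <;> simp [_root_.IsSelfAdjoint]
  · rw [Matrix.trace_diagonal]
    simp [Pi.single_apply, Finset.sum_sub_distrib]
  · intro h
    have h2 := congrFun (congrFun h i0) i0
    simp [Matrix.diagonal_apply_eq, Pi.single_apply, hne] at h2

end StmtAux

theorem stmt3 {d : ℕ} (hd : 2 ≤ d)
    (T : Matrix (Fin d) (Fin d) ℂ →ₗ[ℂ] Matrix (Fin d) (Fin d) ℂ)
    (hpos : TD.PosMap T) (htr : TD.TrPres T) :
    TD.kappaTr T = 0 ↔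
      ∃ τ : Matrix (Fin d) (Fin d) ℂ, TD.Density τ ∧ ∀ X : Matrix (Fin d) (Fin d) ℂ, T X = X.trace • τ := by
  obtain ⟨X0, hX0⟩ := exists_herm' hd
  haveI : Nonempty {X : Matrix (Fin d) (Fin d) ℂ // X.IsHermitian ∧ X.trace = 0 ∧ X ≠ 0} :=
    ⟨⟨X0, hX0⟩⟩
  have h1 : (1:ℕ) < d := lt_of_lt_of_le one_lt_two hd
  have h0 : (0:ℕ) < d := lt_trans zero_lt_one h1
  set i0 : Fin d := ⟨0, h0⟩
  -- the reference density matrix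
  set ρ : Matrix (Fin d) (Fin d) ℂ := Matrix.diagonal (Pi.single i0 1) with hρ
  have hρpsd : ρ.PosSemidef := by
    refine Matrix.posSemidef_diagonal_iff.mpr fun i => ?_
    rcases eq_or_ne i i0 with h | h <;> simp [Pi.single_apply, h]
  have hρtr : ρ.trace = 1 := by
    rw [hρ, Matrix.trace_diagonal]
    simp
  constructor
  · intro hk
    obtain ⟨C, hC0, hC⟩ := trNorm_bound' T
    have hbdd : BddAbove (Set.range fun X : {X : Matrix (Fin d) (Fin d) ℂ //
        X.IsHermitian ∧ X.trace = 0 ∧ X ≠ 0} => TD.trNorm (T X.1) / TD.trNorm X.1) := by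
      refine ⟨C, ?_⟩
      rintro x ⟨X, rfl⟩
      have hXne : X.1 ≠ 0 := X.2.2.2
      have hposX : 0 < TD.trNorm X.1 :=
        lt_of_le_of_ne (trNorm_nonneg' _) fun h => hXne ((trNorm_eq_zero_iff' _).mp h.symm)
      rw [div_le_iff₀ hposX]
      exact hC X.1
    have hherm : ∀ X : Matrix (Fin d) (Fin d) ℂ, X.IsHermitian → X.trace = 0 → T X = 0 := by
      intro X hH htr0
      by_cases hX : X = 0
      · simp [hX]
      · have hle : TD.trNorm (T X) / TD.trNorm X ≤ TD.kappaTr T := by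
          rw [TD.kappaTr]
          exact le_ciSup hbdd ⟨X, hH, htr0, hX⟩
        rw [hk] at hle
        have hposX : 0 < TD.trNorm X :=
          lt_of_le_of_ne (trNorm_nonneg' _) fun h => hX ((trNorm_eq_zero_iff' _).mp h.symm)
        have hle2 : TD.trNorm (T X) ≤ 0 := by
          have := (div_nonpos_iff.mp hle)
          rcases this with ⟨h1', h2'⟩ | ⟨h1', h2'⟩
          · linarith
          · exact h1'
        exact (trNorm_eq_zero_iff' _).mp (le_antisymm hle2 (trNorm_nonneg' _))
    have h0map : ∀ X : Matrix (Fin d) (Fin d) ℂ, X.trace = 0 → T X = 0 := by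
      intro X htr0
      set H : Matrix (Fin d) (Fin d) ℂ := (2:ℂ)⁻¹ • (X + Xᴴ) with hHdef
      set K : Matrix (Fin d) (Fin d) ℂ := (-Complex.I * (2:ℂ)⁻¹) • (X - Xᴴ) with hKdef
      have hHherm : H.IsHermitian := by
        rw [Matrix.IsHermitian, hHdef, Matrix.conjTranspose_smul, Matrix.conjTranspose_add,
          Matrix.conjTranspose_conjTranspose]
        rw [show star ((2:ℂ)⁻¹) = (2:ℂ)⁻¹ by simp]
        rw [add_comm]
      have hKherm : K.IsHermitian := by
        rw [Matrix.IsHermitian, hKdef, Matrix.conjTranspose_smul, Matrix.conjTranspose_sub,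
          Matrix.conjTranspose_conjTranspose]
        rw [show star (-Complex.I * (2:ℂ)⁻¹) = -(-Complex.I * (2:ℂ)⁻¹) by
          simp [Complex.star_def]]
        rw [neg_smul, smul_sub, smul_sub]
        abel
      have htrH : H.trace = 0 := by
        rw [hHdef, Matrix.trace_smul, Matrix.trace_add, Matrix.trace_conjTranspose, htr0]
        simp
      have htrK : K.trace = 0 := by
        rw [hKdef, Matrix.trace_smul, Matrix.trace_sub, Matrix.trace_conjTranspose, htr0]
        simp
      have hXdec : X = H + Complex.I • K := by
        rw [hHdef, hKdef, smul_smul]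
        have : Complex.I * (-Complex.I * (2:ℂ)⁻¹) = (2:ℂ)⁻¹ := by
          rw [show Complex.I * (-Complex.I * (2:ℂ)⁻¹) = -(Complex.I*Complex.I) * (2:ℂ)⁻¹ by ring,
            Complex.I_mul_I]
          ring
        rw [this, smul_add, smul_sub]
        module
      have hTH : T H = 0 := hherm H hHherm htrH
      have hTK : T K = 0 := hherm K hKherm htrK
      rw [hXdec, map_add, _root_.map_smul T Complex.I K, hTH, hTK]
      simp
    refine ⟨T ρ, ⟨hpos ρ hρpsd, by rw [htr ρ, hρtr]⟩, fun X => ?_⟩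
    have htrY : (X - X.trace • ρ).trace = 0 := by
      rw [Matrix.trace_sub, Matrix.trace_smul, hρtr]
      simp
    have hTY := h0map _ htrY
    rw [map_sub, _root_.map_smul, sub_eq_zero] at hTY
    exact hTY
  · rintro ⟨τ, hτ, hrep⟩
    rw [TD.kappaTr]
    have hz : ∀ X : {X : Matrix (Fin d) (Fin d) ℂ // X.IsHermitian ∧ X.trace = 0 ∧ X ≠ 0},
        TD.trNorm (T X.1) / TD.trNorm X.1 = 0 := by
      intro X
      rw [hrep X.1, X.2.2.1, zero_smul, (trNorm_eq_zero_iff' (0 : Matrix (Fin d) (Fin d) ℂ)).mpr rfl,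
        zero_div]
    rw [iSup_congr hz]
    exact ciSup_const
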